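/- arXiv:1305.4416 — 7 statements merged into one kernel-verified Lean document; each statement's English description precedes it below -/
import Mathlib

section
/- Let r, d be coprime positive integers and suppose there exist distinct indices j_1, ..., j_{2k} (all distinct, each less than N) such that the product of (r + j_{2i}*d) over i = 1..k equals the product of (r + j_{2i-1}*d) over i = 1..k. If 2k ≤ n and n ≤ N, then r ≤ N^k and d ≤ N^k. -/
open Finset in
lemma expand_lin {R : Type*} [CommSemiring R] (A : ℕ → R) (x y : R) (k : ℕ) :
    ∏ i ∈ range k, (x + A i * y)
      = ∑ m ∈ range (k + 1),
          (∑ u ∈ powersetCard m (range k), ∏ i ∈ u, A i) * (x ^ (k - m) * y ^ m) := by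
  classical
  rw [Finset.prod_add]
  have h1 : ∀ t ∈ (range k).powerset,
      (∏ i ∈ t, x) * ∏ i ∈ (range k) \ t, (A i * y)
      = x ^ t.card * ((∏ i ∈ (range k) \ t, A i) * y ^ ((range k) \ t).card) := by
    intro t ht
    rw [Finset.prod_const, Finset.prod_mul_distrib, Finset.prod_const]
  rw [Finset.sum_congr rfl h1]
  have h2 : ∑ t ∈ (range k).powerset,
        x ^ t.card * ((∏ i ∈ (range k) \ t, A i) * y ^ ((range k) \ t).card)
      = ∑ u ∈ (range k).powerset, x ^ (k - u.card) * ((∏ i ∈ u, A i) * y ^ u.card) := by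
    refine Finset.sum_nbij' (fun t => (range k) \ t) (fun u => (range k) \ u) ?_ ?_ ?_ ?_ ?_
    · intro t ht; exact Finset.mem_powerset.2 (Finset.sdiff_subset)
    · intro u hu; exact Finset.mem_powerset.2 (Finset.sdiff_subset)
    · intro t ht; exact Finset.sdiff_sdiff_eq_self (Finset.mem_powerset.1 ht)
    · intro u hu; exact Finset.sdiff_sdiff_eq_self (Finset.mem_powerset.1 hu)
    · intro t ht
      have hsub := Finset.mem_powerset.1 ht
      rw [Finset.card_sdiff_of_subset hsub, Finset.card_range]
      have hle : #t ≤ k := (Finset.card_le_card hsub).trans_eq (Finset.card_range k)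
      rw [Nat.sub_sub_self hle]
  rw [h2]
  have h3 : ∑ u ∈ (range k).powerset, x ^ (k - u.card) * ((∏ i ∈ u, A i) * y ^ u.card)
      = ∑ m ∈ range (k + 1), ∑ u ∈ (range k).powerset with u.card = m,
          x ^ (k - u.card) * ((∏ i ∈ u, A i) * y ^ u.card) := by
    refine (Finset.sum_fiberwise_of_maps_to ?_ _).symm
    intro u hu
    rw [Finset.mem_range, Nat.lt_succ_iff]
    exact (Finset.card_le_card (Finset.mem_powerset.1 hu)).trans_eq (Finset.card_range k)
  rw [h3]
  refine Finset.sum_congr rfl fun m hm => ?_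
  rw [← Finset.powersetCard_eq_filter, Finset.sum_mul]
  refine Finset.sum_congr rfl fun u hu => ?_
  have hcard := (Finset.mem_powersetCard.1 hu).2
  rw [hcard]
  ring

open Finset in
theorem stmt_1 (r d N n k : ℕ) (hr : 0 < r) (hd : 0 < d) (hN : 0 < N) (hn : 0 < n)
    (hk : 0 < k) (hcop : Nat.Coprime r d)
    (j : ℕ → ℕ)
    (hinj : ∀ a < 2 * k, ∀ b < 2 * k, j a = j b → a = b)
    (hlt : ∀ i < 2 * k, j i < N)
    (hprod : ∏ i ∈ Finset.range k, (r + j (2 * i) * d)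
           = ∏ i ∈ Finset.range k, (r + j (2 * i + 1) * d))
    (hkn : 2 * k ≤ n) (hnN : n ≤ N) :
    r ≤ N ^ k ∧ d ≤ N ^ k := by
  classical
  have hkN : k ≤ N := by omega
  set Ea : ℕ → ℕ := fun m => ∑ u ∈ powersetCard m (range k), ∏ i ∈ u, j (2 * i) with hEa
  set Eb : ℕ → ℕ := fun m => ∑ u ∈ powersetCard m (range k), ∏ i ∈ u, j (2 * i + 1) with hEb
  -- bound on the symmetric sums
  have hbound : ∀ (f : ℕ → ℕ), (∀ i < k, f i < N) → ∀ m, m ≤ k →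
      (∑ u ∈ powersetCard m (range k), ∏ i ∈ u, f i) ≤ N ^ k := by
    intro f hf m hm
    have h1 : ∀ u ∈ powersetCard m (range k), ∏ i ∈ u, f i ≤ N ^ m := by
      intro u hu
      obtain ⟨hsub, hcard⟩ := Finset.mem_powersetCard.1 hu
      calc ∏ i ∈ u, f i ≤ ∏ i ∈ u, N := by
            refine Finset.prod_le_prod (fun i _ => Nat.zero_le _) (fun i hi => ?_)
            exact le_of_lt (hf i (Finset.mem_range.1 (hsub hi)))
        _ = N ^ m := by rw [Finset.prod_const, hcard]
    calc (∑ u ∈ powersetCard m (range k), ∏ i ∈ u, f i)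
        ≤ ∑ u ∈ powersetCard m (range k), N ^ m := Finset.sum_le_sum h1
      _ = (k.choose m) * N ^ m := by
          rw [Finset.sum_const, Finset.card_powersetCard, Finset.card_range, smul_eq_mul]
      _ ≤ k ^ (k - m) * N ^ m := by
          have h2 : k.choose m = k.choose (k - m) := (Nat.choose_symm hm).symm
          rw [h2]
          exact Nat.mul_le_mul_right _ (Nat.choose_le_pow k (k - m))
      _ ≤ N ^ (k - m) * N ^ m :=
          Nat.mul_le_mul_right _ (Nat.pow_le_pow_left hkN _)
      _ = N ^ k := by rw [← pow_add]; congr 1; omega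
  have hA : ∀ i < k, j (2 * i) < N := fun i hi => hlt _ (by omega)
  have hB : ∀ i < k, j (2 * i + 1) < N := fun i hi => hlt _ (by omega)
  have hEaB : ∀ m, m ≤ k → Ea m ≤ N ^ k := fun m hm => hbound _ hA m hm
  have hEbB : ∀ m, m ≤ k → Eb m ≤ N ^ k := fun m hm => hbound _ hB m hm
  set c : ℕ → ℤ := fun m => (Ea m : ℤ) - (Eb m : ℤ) with hc
  have hEac : ∀ m, (Ea m : ℤ) = ∑ u ∈ powersetCard m (range k), ∏ i ∈ u, (j (2 * i) : ℤ) := by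
    intro m; rw [hEa]; push_cast; rfl
  have hEbc : ∀ m, (Eb m : ℤ) = ∑ u ∈ powersetCard m (range k), ∏ i ∈ u, (j (2 * i + 1) : ℤ) := by
    intro m; rw [hEb]; push_cast; rfl
  have hzero : ∑ m ∈ range (k + 1), c m * ((r : ℤ) ^ (k - m) * (d : ℤ) ^ m) = 0 := by
    have h1 := expand_lin (fun i => (j (2 * i) : ℤ)) (r : ℤ) (d : ℤ) k
    have h2 := expand_lin (fun i => (j (2 * i + 1) : ℤ)) (r : ℤ) (d : ℤ) k
    have h3 : (∏ i ∈ range k, ((r : ℤ) + (j (2 * i) : ℤ) * d))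
        = ∏ i ∈ range k, ((r : ℤ) + (j (2 * i + 1) : ℤ) * d) := by
      exact_mod_cast congrArg (fun z : ℕ => (z : ℤ)) hprod
    rw [h1, h2] at h3
    have h4 : ∑ m ∈ range (k + 1), c m * ((r : ℤ) ^ (k - m) * (d : ℤ) ^ m)
        = (∑ m ∈ range (k + 1),
            (∑ u ∈ powersetCard m (range k), ∏ i ∈ u, (j (2 * i) : ℤ)) * ((r : ℤ) ^ (k - m) * (d : ℤ) ^ m))
          - ∑ m ∈ range (k + 1),
            (∑ u ∈ powersetCard m (range k), ∏ i ∈ u, (j (2 * i + 1) : ℤ)) * ((r : ℤ) ^ (k - m) * (d : ℤ) ^ m) := by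
      rw [← Finset.sum_sub_distrib]
      refine Finset.sum_congr rfl fun m _ => ?_
      rw [hc, ← hEac, ← hEbc]
      ring
    rw [h4, h3, sub_self]
  -- nonvanishing: some coefficient is nonzero
  set T : Finset ℕ := {m ∈ range (k + 1) | c m ≠ 0} with hT
  have hTne : T.Nonempty := by
    by_contra hTn
    have hall : ∀ m, m ≤ k → (Ea m : ℤ) = (Eb m : ℤ) := by
      intro m hm
      by_contra hne
      have : m ∈ T := Finset.mem_filter.2 ⟨Finset.mem_range.2 (by omega), sub_ne_zero.2 hne⟩
      exact hTn ⟨m, this⟩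
    have h1 := expand_lin (fun i => (j (2 * i) : ℤ)) (-(j 0 : ℤ)) 1 k
    have h2 := expand_lin (fun i => (j (2 * i + 1) : ℤ)) (-(j 0 : ℤ)) 1 k
    have h3 : (∏ i ∈ range k, (-(j 0 : ℤ) + (j (2 * i) : ℤ) * 1))
        = ∏ i ∈ range k, (-(j 0 : ℤ) + (j (2 * i + 1) : ℤ) * 1) := by
      rw [h1, h2]
      refine Finset.sum_congr rfl fun m hm => ?_
      rw [← hEac, ← hEbc, hall m (Nat.lt_succ_iff.1 (Finset.mem_range.1 hm))]
    have hL : (∏ i ∈ range k, (-(j 0 : ℤ) + (j (2 * i) : ℤ) * 1)) = 0 := by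
      apply Finset.prod_eq_zero (Finset.mem_range.2 hk)
      simp
    have hR : (∏ i ∈ range k, (-(j 0 : ℤ) + (j (2 * i + 1) : ℤ) * 1)) ≠ 0 := by
      rw [Finset.prod_ne_zero_iff]
      intro i hi
      have hi' : i < k := Finset.mem_range.1 hi
      intro hzero2
      have : (j (2 * i + 1) : ℤ) = (j (2 * 0) : ℤ) := by push_cast at hzero2 ⊢; linarith
      have hj : j (2 * i + 1) = j 0 := by exact_mod_cast this
      have := hinj (2 * i + 1) (by omega) 0 (by omega) hj
      omega
    rw [h3] at hL
    exact hR hL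
  have hrd0 : (d : ℤ) ≠ 0 := by exact_mod_cast hd.ne'
  have hrr0 : (r : ℤ) ≠ 0 := by exact_mod_cast hr.ne'
  have hcopZ : IsCoprime (r : ℤ) (d : ℤ) := Nat.isCoprime_iff_coprime.2 hcop
  have habs : ∀ m ∈ T, (m ≤ k) ∧ |c m| ≤ (N : ℤ) ^ k ∧ c m ≠ 0 := by
    intro m hm
    obtain ⟨hm1, hm2⟩ := Finset.mem_filter.1 hm
    have hmk : m ≤ k := by have := Finset.mem_range.1 hm1; omega
    refine ⟨hmk, ?_, hm2⟩
    have h1 : (Ea m : ℤ) ≤ (N : ℤ) ^ k := by exact_mod_cast hEaB m hmk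
    have h2 : (Eb m : ℤ) ≤ (N : ℤ) ^ k := by exact_mod_cast hEbB m hmk
    have h3 : (0 : ℤ) ≤ (Ea m : ℤ) := Int.natCast_nonneg _
    have h4 : (0 : ℤ) ≤ (Eb m : ℤ) := Int.natCast_nonneg _
    rw [hc, abs_sub_le_iff]
    constructor <;> linarith
  -- d bound, using the minimal nonzero coefficient
  have hdle : d ≤ N ^ k := by
    set m1 := T.min' hTne with hm1def
    obtain ⟨hm1k, hm1abs, hm1ne⟩ := habs m1 (T.min'_mem hTne)
    have hm1mem : m1 ∈ range (k + 1) := Finset.mem_range.2 (by omega)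
    have hdvd : (d : ℤ) ^ (m1 + 1) ∣ ∑ m ∈ (range (k + 1)).erase m1, c m * ((r : ℤ) ^ (k - m) * (d : ℤ) ^ m) := by
      refine Finset.dvd_sum fun m hm => ?_
      have hmne : m ≠ m1 := Finset.ne_of_mem_erase hm
      have hmr : m ∈ range (k + 1) := Finset.mem_of_mem_erase hm
      by_cases hcm : c m = 0
      · rw [hcm, zero_mul]; exact dvd_zero _
      · have hmT : m ∈ T := Finset.mem_filter.2 ⟨hmr, hcm⟩
        have : m1 ≤ m := T.min'_le m hmT
        have hlt' : m1 + 1 ≤ m := by omega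
        exact ((pow_dvd_pow _ hlt').mul_left _).mul_left _
    have hsum : c m1 * ((r : ℤ) ^ (k - m1) * (d : ℤ) ^ m1)
        = -∑ m ∈ (range (k + 1)).erase m1, c m * ((r : ℤ) ^ (k - m) * (d : ℤ) ^ m) := by
      have h6 := Finset.add_sum_erase (range (k + 1))
        (fun m => c m * ((r : ℤ) ^ (k - m) * (d : ℤ) ^ m)) hm1mem
      rw [hzero] at h6
      linarith
    have hdvd2 : (d : ℤ) ^ (m1 + 1) ∣ c m1 * ((r : ℤ) ^ (k - m1) * (d : ℤ) ^ m1) := by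
      rw [hsum]; exact dvd_neg.2 hdvd
    obtain ⟨t, ht⟩ := hdvd2
    have hcancel : c m1 * (r : ℤ) ^ (k - m1) = (d : ℤ) * t := by
      have h5 : (c m1 * (r : ℤ) ^ (k - m1)) * (d : ℤ) ^ m1 = ((d : ℤ) * t) * (d : ℤ) ^ m1 := by
        calc (c m1 * (r : ℤ) ^ (k - m1)) * (d : ℤ) ^ m1
            = c m1 * ((r : ℤ) ^ (k - m1) * (d : ℤ) ^ m1) := by ring
          _ = (d : ℤ) ^ (m1 + 1) * t := ht
          _ = (d : ℤ) * t * (d : ℤ) ^ m1 := by ring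
      exact mul_right_cancel₀ (pow_ne_zero m1 hrd0) h5
    have hdvd3 : (d : ℤ) ∣ c m1 * (r : ℤ) ^ (k - m1) := ⟨t, hcancel⟩
    have hdvd4 : (d : ℤ) ∣ c m1 :=
      (hcopZ.symm.pow_right).dvd_of_dvd_mul_right hdvd3
    have : (d : ℤ) ≤ |c m1| := Int.le_of_dvd (abs_pos.2 hm1ne) ((dvd_abs _ _).2 hdvd4)
    exact_mod_cast this.trans hm1abs
  -- r bound, using the maximal nonzero coefficient
  have hrle : r ≤ N ^ k := by
    set m0 := T.max' hTne with hm0def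
    obtain ⟨hm0k, hm0abs, hm0ne⟩ := habs m0 (T.max'_mem hTne)
    have hm0mem : m0 ∈ range (k + 1) := Finset.mem_range.2 (by omega)
    have hdvd : (r : ℤ) ^ (k - m0 + 1) ∣ ∑ m ∈ (range (k + 1)).erase m0, c m * ((r : ℤ) ^ (k - m) * (d : ℤ) ^ m) := by
      refine Finset.dvd_sum fun m hm => ?_
      have hmne : m ≠ m0 := Finset.ne_of_mem_erase hm
      have hmr : m ∈ range (k + 1) := Finset.mem_of_mem_erase hm
      by_cases hcm : c m = 0
      · rw [hcm, zero_mul]; exact dvd_zero _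
      · have hmT : m ∈ T := Finset.mem_filter.2 ⟨hmr, hcm⟩
        have hle : m ≤ m0 := T.le_max' m hmT
        have hlt' : k - m0 + 1 ≤ k - m := by omega
        exact Dvd.dvd.mul_left (Dvd.dvd.mul_right (pow_dvd_pow _ hlt') _) _
    have hsum : c m0 * ((r : ℤ) ^ (k - m0) * (d : ℤ) ^ m0)
        = -∑ m ∈ (range (k + 1)).erase m0, c m * ((r : ℤ) ^ (k - m) * (d : ℤ) ^ m) := by
      have h6 := Finset.add_sum_erase (range (k + 1))
        (fun m => c m * ((r : ℤ) ^ (k - m) * (d : ℤ) ^ m)) hm0mem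
      rw [hzero] at h6
      linarith
    have hdvd2 : (r : ℤ) ^ (k - m0 + 1) ∣ c m0 * ((r : ℤ) ^ (k - m0) * (d : ℤ) ^ m0) := by
      rw [hsum]; exact dvd_neg.2 hdvd
    obtain ⟨t, ht⟩ := hdvd2
    have hcancel : c m0 * (d : ℤ) ^ m0 = (r : ℤ) * t := by
      have h5 : (c m0 * (d : ℤ) ^ m0) * (r : ℤ) ^ (k - m0) = ((r : ℤ) * t) * (r : ℤ) ^ (k - m0) := by
        calc (c m0 * (d : ℤ) ^ m0) * (r : ℤ) ^ (k - m0)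
            = c m0 * ((r : ℤ) ^ (k - m0) * (d : ℤ) ^ m0) := by ring
          _ = (r : ℤ) ^ (k - m0 + 1) * t := ht
          _ = (r : ℤ) * t * (r : ℤ) ^ (k - m0) := by ring
      exact mul_right_cancel₀ (pow_ne_zero (k - m0) hrr0) h5
    have hdvd3 : (r : ℤ) ∣ c m0 * (d : ℤ) ^ m0 := ⟨t, hcancel⟩
    have hdvd4 : (r : ℤ) ∣ c m0 :=
      (hcopZ.pow_right).dvd_of_dvd_mul_right hdvd3
    have : (r : ℤ) ≤ |c m0| := Int.le_of_dvd (abs_pos.2 hm0ne) ((dvd_abs _ _).2 hdvd4)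
    exact_mod_cast this.trans hm0abs
  exact ⟨hrle, hdle⟩
end

section
/- For every sufficiently large n, there exists a set B of at most 2n natural numbers such that the product set B.B = {b*b' : b, b' ∈ B} contains every natural number in the interval [1, ⌊n * log n⌋]. In particular, B.B contains an arithmetic progression of length Ω(|B| * log |B|). -/
open scoped Pointwise
open Finset

private lemma log_le_four_sqrt_sqrt {x : ℝ} (hx : 0 < x) :
    Real.log x ≤ 4 * Real.sqrt (Real.sqrt x) := by
  have h1 : Real.log (Real.sqrt (Real.sqrt x)) = Real.log x / 4 := by
    rw [Real.log_sqrt (Real.sqrt_nonneg x), Real.log_sqrt hx.le]; ring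
  have h2 := Real.log_le_sub_one_of_pos (Real.sqrt_pos.2 (Real.sqrt_pos.2 hx))
  have h3 := Real.sqrt_nonneg (Real.sqrt x)
  nlinarith

set_option maxHeartbeats 2000000 in
theorem stmt_3 :
    ∃ n₀ : ℕ, ∀ n ≥ n₀, ∃ B : Finset ℕ,
      B.card ≤ 2 * n ∧
      Finset.Icc 1 ⌊(n : ℝ) * Real.log n⌋₊ ⊆ B * B := by
  refine ⟨2 ^ 29, fun n hn => ?_⟩
  set L : ℝ := Real.log n with hLdef
  set M : ℕ := ⌊(n : ℝ) * L⌋₊ with hMdef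
  set K : ℕ := n / 2 with hKdef
  have hnR : (2 : ℝ) ^ 29 ≤ (n : ℝ) := by exact_mod_cast hn
  have hn0 : (0 : ℝ) < n := by positivity
  have hlog2u := Real.log_two_lt_d9
  have hlog2l := Real.log_two_gt_d9
  -- L ≥ 20
  have hL20 : (20 : ℝ) ≤ L := by
    have h1 : Real.log ((2 : ℝ) ^ 29) ≤ L := Real.log_le_log (by positivity) hnR
    rw [Real.log_pow] at h1
    push_cast at h1
    nlinarith [hlog2l]
  have hL0 : (0 : ℝ) ≤ L := by linarith
  -- floor bound
  have hM : (M : ℝ) ≤ (n : ℝ) * L := Nat.floor_le (by positivity)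
  -- K bounds
  have hKle : (K : ℝ) ≤ (n : ℝ) / 2 := Nat.cast_div_le
  have hKge : (n : ℝ) / 4 ≤ (K : ℝ) := by
    have h1 : n ≤ 2 * K + 1 := by omega
    have h2 : (2 : ℕ) ^ 28 ≤ K := by omega
    have h1' : (n : ℝ) ≤ 2 * K + 1 := by exact_mod_cast h1
    have h2' : (1 : ℝ) ≤ (K : ℝ) := by exact_mod_cast Nat.one_le_iff_ne_zero.2 (by omega)
    linarith
  have hK2 : 2 ≤ K := by omega
  -- sqrt bounds : L^2 ≤ 16 * sqrt n and 1024 ≤ sqrt n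
  have hsq : Real.sqrt n * Real.sqrt n = (n : ℝ) := Real.mul_self_sqrt hn0.le
  have hsqn : (1024 : ℝ) ≤ Real.sqrt n := by
    have : ((1024 : ℝ)) = Real.sqrt (1024 ^ 2) := by
      rw [Real.sqrt_sq]; norm_num
    rw [this]
    apply Real.sqrt_le_sqrt
    nlinarith
  have hL2 : L ^ 2 ≤ 16 * Real.sqrt n := by
    have h1 := log_le_four_sqrt_sqrt hn0
    have h2 : Real.sqrt (Real.sqrt n) * Real.sqrt (Real.sqrt n) = Real.sqrt n :=
      Real.mul_self_sqrt (Real.sqrt_nonneg n)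
    have h3 : (0 : ℝ) ≤ Real.sqrt (Real.sqrt n) := Real.sqrt_nonneg _
    nlinarith
  -- key nat inequality : M^2 ≤ K * (K+1)^2
  have hcov : M * M ≤ K * ((K + 1) * (K + 1)) := by
    have hr : (M : ℝ) * M ≤ (K : ℝ) * ((K + 1) * (K + 1)) := by
      have h1 : (M : ℝ) * M ≤ (n : ℝ) ^ 2 * L ^ 2 := by nlinarith [Nat.cast_nonneg (α := ℝ) M]
      have hLn : L ^ 2 ≤ (n : ℝ) / 64 := by
        nlinarith [hsq, hsqn, Real.sqrt_nonneg (n : ℝ), hL2]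
      have h2 : (n : ℝ) ^ 2 * L ^ 2 ≤ (n : ℝ) ^ 3 / 64 := by
        have := mul_le_mul_of_nonneg_left hLn (by positivity : (0 : ℝ) ≤ (n : ℝ) ^ 2)
        nlinarith [this]
      have h3 : (n : ℝ) ^ 3 / 64 ≤ (K : ℝ) * ((K + 1) * (K + 1)) := by
        have hc : ((n : ℝ) / 4) ^ 3 ≤ (K : ℝ) ^ 3 := pow_le_pow_left₀ (by positivity) hKge 3
        have hK0 : (0 : ℝ) ≤ (K : ℝ) := Nat.cast_nonneg _
        nlinarith [hc, hK0, sq_nonneg ((K : ℝ))]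
      linarith
    exact_mod_cast hr
  have hMK : M ≤ K * (K + 1) := by
    by_contra h
    push_neg at h
    have h2 : (K * (K + 1)) * (K * (K + 1)) < M * M := Nat.mul_self_lt_mul_self h
    have h3 : K * ((K + 1) * (K + 1)) ≤ (K * (K + 1)) * (K * (K + 1)) := by
      have hkk : K ≤ K * K := Nat.le_mul_of_pos_left K (by omega)
      calc K * ((K + 1) * (K + 1)) ≤ (K * K) * ((K + 1) * (K + 1)) :=
            Nat.mul_le_mul hkk (le_refl _)
        _ = (K * (K + 1)) * (K * (K + 1)) := by ring
    omega
  -- the set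
  set P : Finset ℕ := (Finset.Icc 1 M).filter (fun p => K < p ∧ p.Prime) with hPdef
  refine ⟨Finset.Icc 1 K ∪ P, ?_, ?_⟩
  · -- cardinality bound
    have hcard1 : (Finset.Icc 1 K ∪ P).card ≤ K + P.card := by
      have := Finset.card_union_le (Finset.Icc 1 K) P
      simpa [Nat.card_Icc] using this
    have hKP : K ^ P.card ≤ 4 ^ M := by
      calc K ^ P.card ≤ ∏ p ∈ P, p := by
            apply Finset.pow_card_le_prod
            intro p hp
            exact ((Finset.mem_filter.1 hp).2.1).le
        _ ≤ ∏ p ∈ (Finset.range (M + 1)).filter Nat.Prime, p := by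
            apply Finset.prod_le_prod_of_subset_of_one_le'
            · intro p hp
              have h := Finset.mem_filter.1 hp
              exact Finset.mem_filter.2 ⟨Finset.mem_range.2 (by
                have := (Finset.mem_Icc.1 h.1).2; omega), h.2.2⟩
            · intro i hi _
              exact ((Finset.mem_filter.1 hi).2).one_lt.le
        _ = primorial M := rfl
        _ ≤ 4 ^ M := primorial_le_4_pow M
    -- move to reals
    have hKPr : ((K : ℝ)) ^ P.card ≤ (4 : ℝ) ^ M := by exact_mod_cast hKP
    have hlogs : (P.card : ℝ) * Real.log K ≤ (M : ℝ) * Real.log 4 := by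
      have := Real.log_le_log (by positivity) hKPr
      rwa [Real.log_pow, Real.log_pow] at this
    have hlog4 : Real.log 4 = 2 * Real.log 2 := by
      rw [show (4 : ℝ) = 2 ^ 2 by norm_num, Real.log_pow]; push_cast; ring
    have hlogK : L - 2 * Real.log 2 ≤ Real.log K := by
      have h1 : Real.log ((n : ℝ) / 4) ≤ Real.log K :=
        Real.log_le_log (by positivity) hKge
      rw [Real.log_div (ne_of_gt hn0) (by norm_num)] at h1
      rw [hlog4] at h1
      linarith [h1]
    have hPcard : (P.card : ℝ) ≤ 3 / 2 * n := by
      by_contra hcon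
      push_neg at hcon
      have hc0 : (0 : ℝ) ≤ (P.card : ℝ) := Nat.cast_nonneg _
      have key : (P.card : ℝ) * (L - 2 * Real.log 2) ≤ 2 * Real.log 2 * (n * L) := by
        have h1 : (P.card : ℝ) * (L - 2 * Real.log 2) ≤ (P.card : ℝ) * Real.log K :=
          mul_le_mul_of_nonneg_left hlogK hc0
        have h2 : (M : ℝ) * Real.log 4 ≤ 2 * Real.log 2 * (n * L) := by
          rw [hlog4]
          have : (0 : ℝ) ≤ 2 * Real.log 2 := by nlinarith
          nlinarith [hM]
        linarith
      have hnL0 : (0 : ℝ) ≤ (n : ℝ) * L := by positivity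
      have ht : (0 : ℝ) < L - 2 * Real.log 2 := by nlinarith
      have h5 : 3 / 2 * (n : ℝ) * (L - 2 * Real.log 2) <
          (P.card : ℝ) * (L - 2 * Real.log 2) := mul_lt_mul_of_pos_right hcon ht
      have hu1 : Real.log 2 * ((n : ℝ) * L) ≤ 0.6931471808 * ((n : ℝ) * L) :=
        mul_le_mul_of_nonneg_right hlog2u.le hnL0
      have hu2 : Real.log 2 * (n : ℝ) ≤ 0.6931471808 * (n : ℝ) :=
        mul_le_mul_of_nonneg_right hlog2u.le hn0.le
      have h20 : 20 * (n : ℝ) ≤ (n : ℝ) * L := by nlinarith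
      nlinarith [key, h5, hu1, hu2, h20, hn0]
    have : ((Finset.Icc 1 K ∪ P).card : ℝ) ≤ 2 * n := by
      have h1 : ((Finset.Icc 1 K ∪ P).card : ℝ) ≤ (K : ℝ) + P.card := by
        exact_mod_cast hcard1
      linarith
    exact_mod_cast this
  · -- covering
    intro m hm
    obtain ⟨hm1, hmM⟩ := Finset.mem_Icc.1 hm
    have hm0 : m ≠ 0 := by omega
    by_cases hmK : m ≤ K
    · have h1 : m ∈ Finset.Icc 1 K ∪ P :=
        Finset.mem_union_left _ (Finset.mem_Icc.2 ⟨hm1, hmK⟩)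
      have h2 : (1 : ℕ) ∈ Finset.Icc 1 K ∪ P :=
        Finset.mem_union_left _ (Finset.mem_Icc.2 ⟨le_refl 1, by omega⟩)
      have := Finset.mul_mem_mul h1 h2
      rwa [mul_one] at this
    · push_neg at hmK
      by_cases hp : ∃ p, p.Prime ∧ p ∣ m ∧ K < p
      · obtain ⟨p, hpp, hpm, hKp⟩ := hp
        have hpM : p ≤ M := le_trans (Nat.le_of_dvd (by omega) hpm) hmM
        have hpP : p ∈ P := Finset.mem_filter.2
          ⟨Finset.mem_Icc.2 ⟨hpp.one_lt.le, hpM⟩, hKp, hpp⟩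
        have hpc : p * (m / p) = m := Nat.mul_div_cancel' hpm
        have hc1 : 1 ≤ m / p := by
          rcases Nat.eq_zero_or_pos (m / p) with h | h
          · rw [h, mul_zero] at hpc; omega
          · exact h
        have hcK : m / p ≤ K := by
          have h1 : (m / p) * (K + 1) ≤ (m / p) * p :=
            Nat.mul_le_mul_left _ hKp
          have h2 : (m / p) * p = m := by rw [mul_comm]; exact hpc
          have h3 : (m / p) * (K + 1) ≤ K * (K + 1) := by omega
          exact Nat.le_of_mul_le_mul_right h3 (by omega)
        have hc : m / p ∈ Finset.Icc 1 K ∪ P :=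
          Finset.mem_union_left _ (Finset.mem_Icc.2 ⟨hc1, hcK⟩)
        have := Finset.mul_mem_mul (Finset.mem_union_right (Finset.Icc 1 K) hpP) hc
        rwa [hpc] at this
      · push_neg at hp
        set S : Finset ℕ := m.divisors.filter (fun d => d ≤ K) with hSdef
        have hS1 : (1 : ℕ) ∈ S :=
          Finset.mem_filter.2 ⟨Nat.one_mem_divisors.2 hm0, by omega⟩
        have hSne : S.Nonempty := ⟨1, hS1⟩
        set a := S.max' hSne with hadef
        have haS : a ∈ S := S.max'_mem hSne
        have ham : a ∣ m := (Nat.mem_divisors.1 (Finset.mem_filter.1 haS).1).1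
        have haK : a ≤ K := (Finset.mem_filter.1 haS).2
        have ha0 : 0 < a := Nat.pos_of_mem_divisors (Finset.mem_filter.1 haS).1
        set b := m / a with hbdef
        have hab : a * b = m := Nat.mul_div_cancel' ham
        have hbm : b ∣ m := ⟨a, by rw [mul_comm]; exact hab.symm⟩
        have hb0 : b ≠ 0 := by intro h; rw [h, mul_zero] at hab; omega
        have key : ∀ r, r.Prime → r ∣ b → K < a * r := by
          intro r hr hrb
          by_contra hle
          push_neg at hle
          have harm : a * r ∣ m := by
            rw [← hab]; exact mul_dvd_mul_left a hrb
          have hmem : a * r ∈ S :=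
            Finset.mem_filter.2 ⟨Nat.mem_divisors.2 ⟨harm, hm0⟩, hle⟩
          have hle2 := S.le_max' _ hmem
          have := hr.two_le
          nlinarith
        have hbK : b ≤ K := by
          by_contra hbK'
          push_neg at hbK'
          have hb1 : b ≠ 1 := by omega
          obtain ⟨q, hq, hqb⟩ := Nat.exists_prime_and_dvd hb1
          have hqb'eq : q * (b / q) = b := Nat.mul_div_cancel' hqb
          set b' := b / q with hb'def
          have hb'0 : b' ≠ 0 := by intro h; rw [h, mul_zero] at hqb'eq; omega
          have hb'1 : b' ≠ 1 := by
            intro h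
            rw [h, mul_one] at hqb'eq
            have hqm : q ∣ m := dvd_trans hqb hbm
            have := hp q hq hqm
            omega
          obtain ⟨q', hq', hq'b'⟩ := Nat.exists_prime_and_dvd hb'1
          have hb'b : b' ∣ b := ⟨q, by rw [mul_comm]; exact hqb'eq.symm⟩
          have hq'b : q' ∣ b := dvd_trans hq'b' hb'b
          have h1 := key q hq hqb
          have h2 := key q' hq' hq'b
          have hqq'b : q * q' ≤ b := by
            have hq'le : q' ≤ b' := Nat.le_of_dvd (Nat.pos_of_ne_zero hb'0) hq'b'
            calc q * q' ≤ q * b' := Nat.mul_le_mul_left _ hq'le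
              _ = b := hqb'eq
          -- (K+1)^3 ≤ K*(K+1)^2, contradiction
          have e1 : (K + 1) * (K + 1) ≤ (a * q) * (a * q') :=
            Nat.mul_le_mul h1 h2
          have e2 : ((K + 1) * (K + 1)) * b ≤ (a * b) * (a * b) := by
            calc ((K + 1) * (K + 1)) * b ≤ ((a * q) * (a * q')) * b :=
                  Nat.mul_le_mul_right _ e1
              _ = (a * a) * ((q * q') * b) := by ring
              _ ≤ (a * a) * (b * b) := by
                  apply Nat.mul_le_mul_left
                  exact Nat.mul_le_mul_right _ hqq'b
              _ = (a * b) * (a * b) := by ring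
          rw [hab] at e2
          have e3 : m * m ≤ M * M := Nat.mul_le_mul hmM hmM
          have e4 : ((K + 1) * (K + 1)) * b ≤ ((K + 1) * (K + 1)) * K := by
            calc ((K + 1) * (K + 1)) * b ≤ M * M := le_trans e2 e3
              _ ≤ K * ((K + 1) * (K + 1)) := hcov
              _ = ((K + 1) * (K + 1)) * K := by ring
          have := Nat.le_of_mul_le_mul_left e4 (by positivity)
          omega
        have hb1 : 1 ≤ b := Nat.pos_of_ne_zero hb0
        have hA : a ∈ Finset.Icc 1 K ∪ P :=
          Finset.mem_union_left _ (Finset.mem_Icc.2 ⟨ha0, haK⟩)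
        have hB : b ∈ Finset.Icc 1 K ∪ P :=
          Finset.mem_union_left _ (Finset.mem_Icc.2 ⟨hb1, hbK⟩)
        have := Finset.mul_mem_mul hA hB
        rwa [hab] at this
end

section
/- Let x be a natural number with n ≤ x ≤ n * log n, where n is sufficiently large. If every prime factor of x is at most log n, then x can be written as a product x = d_1 * d_2 with d_1 ≤ n and d_2 ≤ n. -/
theorem stmt_4 :
    ∃ n₀ : ℕ, ∀ n ≥ n₀, ∀ x : ℕ,
      n ≤ x → (x : ℝ) ≤ (n : ℝ) * Real.log n →
      (∀ p : ℕ, p.Prime → p ∣ x → (p : ℝ) ≤ Real.log n) →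
      ∃ d₁ d₂ : ℕ, x = d₁ * d₂ ∧ d₁ ≤ n ∧ d₂ ≤ n := by
  use 256
  intro n hn x hnx hx hprime
  have hn0 : 0 < n := by omega
  have hx0 : 0 < x := by omega
  have hlogpos : (0:ℝ) < Real.log n := by
    apply Real.log_pos
    exact_mod_cast (by omega : 1 < n)
  -- (log n)^2 ≤ n
  have hlogsq : (Real.log n)^2 ≤ (n:ℝ) := by
    set y : ℝ := (n:ℝ) with hy'
    have hy : (256:ℝ) ≤ y := by rw [hy']; exact_mod_cast hn
    have hy0 : (0:ℝ) ≤ y := by linarith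
    have h1 : Real.log y = 4 * Real.log (Real.sqrt (Real.sqrt y)) := by
      rw [Real.log_sqrt (Real.sqrt_nonneg y), Real.log_sqrt hy0]; ring
    have h3 : Real.sqrt (Real.sqrt y) ^ 2 = Real.sqrt y := Real.sq_sqrt (Real.sqrt_nonneg y)
    have h4 : (16:ℝ) ≤ Real.sqrt y := by
      have h := Real.sqrt_le_sqrt hy
      have h256 : Real.sqrt 256 = 16 := by
        rw [show (256:ℝ) = 16^2 by norm_num, Real.sqrt_sq (by norm_num)]
      linarith
    have h5 : Real.sqrt y * Real.sqrt y = y := Real.mul_self_sqrt hy0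
    have hss : 0 ≤ Real.sqrt (Real.sqrt y) := Real.sqrt_nonneg _
    have hs1 : (1:ℝ) ≤ Real.sqrt (Real.sqrt y) := by nlinarith
    have h2 : Real.log (Real.sqrt (Real.sqrt y)) ≤ Real.sqrt (Real.sqrt y) := by
      linarith [Real.log_le_sub_one_of_pos (by linarith : (0:ℝ) < Real.sqrt (Real.sqrt y))]
    have h6 : 0 ≤ Real.log (Real.sqrt (Real.sqrt y)) := Real.log_nonneg hs1
    nlinarith
  classical
  set S := x.divisors.filter (fun d => d ≤ n) with hS
  have h1S : 1 ∈ S := by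
    simp [hS, Nat.mem_divisors, hx0.ne']; omega
  have hSne : S.Nonempty := ⟨1, h1S⟩
  obtain ⟨d₁, hd₁mem, hd₁max⟩ : ∃ d ∈ S, ∀ e ∈ S, e ≤ d :=
    ⟨S.max' hSne, S.max'_mem hSne, fun e he => S.le_max' e he⟩
  simp only [hS, Finset.mem_filter, Nat.mem_divisors] at hd₁mem
  obtain ⟨⟨hd₁dvd, -⟩, hd₁le⟩ := hd₁mem
  obtain ⟨d₂, hxd⟩ := hd₁dvd
  refine ⟨d₁, d₂, hxd, hd₁le, ?_⟩
  by_contra hd₂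
  push_neg at hd₂
  have hd₁pos : 0 < d₁ := by
    rcases Nat.eq_zero_or_pos d₁ with h | h
    · rw [h] at hxd; simp at hxd; omega
    · exact h
  have hd₂ne1 : d₂ ≠ 1 := by omega
  obtain ⟨p, hp, hpd⟩ := Nat.exists_prime_and_dvd hd₂ne1
  have hpx : p ∣ x := hxd ▸ (hpd.mul_left d₁)
  have hple : (p:ℝ) ≤ Real.log n := hprime p hp hpx
  have hmax : ¬ (d₁ * p ≤ n) := by
    intro h
    have hmem : d₁ * p ∈ S := by
      simp only [hS, Finset.mem_filter, Nat.mem_divisors]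
      exact ⟨⟨hxd ▸ mul_dvd_mul_left d₁ hpd, hx0.ne'⟩, h⟩
    have hle := hd₁max _ hmem
    have hlt : d₁ < d₁ * p := lt_mul_iff_one_lt_right hd₁pos |>.mpr hp.one_lt
    omega
  push_neg at hmax
  have h1 : (n:ℝ) < (d₁:ℝ) * Real.log n := by
    have : (n:ℝ) < (d₁:ℝ) * (p:ℝ) := by exact_mod_cast hmax
    calc (n:ℝ) < (d₁:ℝ) * (p:ℝ) := this
    _ ≤ (d₁:ℝ) * Real.log n := by
        apply mul_le_mul_of_nonneg_left hple (by positivity)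
  have hxr : (d₁:ℝ) * (d₂:ℝ) = (x:ℝ) := by exact_mod_cast hxd.symm
  have hd₂pos : (0:ℝ) < (d₂:ℝ) := by exact_mod_cast (by omega : 0 < d₂)
  have h2 : (n:ℝ) * d₂ < ((n:ℝ) * Real.log n) * Real.log n := by
    calc (n:ℝ) * d₂ < ((d₁:ℝ) * Real.log n) * d₂ :=
          mul_lt_mul_of_pos_right h1 hd₂pos
    _ = (x:ℝ) * Real.log n := by rw [← hxr]; ring
    _ ≤ ((n:ℝ) * Real.log n) * Real.log n :=
          mul_le_mul_of_nonneg_right hx hlogpos.le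
  have hnr : (0:ℝ) < (n:ℝ) := by exact_mod_cast hn0
  have h3 : (d₂:ℝ) < (Real.log n)^2 := by nlinarith
  have h4 : (d₂:ℝ) ≤ (n:ℝ) := by linarith
  have : d₂ ≤ n := by exact_mod_cast h4
  omega
end

section
/- Suppose b_1, b_2, b_3, b_4 are nonzero complex numbers such that the four products b_1*b_2, b_2*b_3, b_3*b_4, b_4*b_1 are four distinct elements of the set A = {r + i : i ∈ ℤ, 0 ≤ i ≤ N} for some complex number r. Then r is rational. -/
theorem stmt_6 (r : ℂ) (N : ℕ) (hN : 0 < N)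
    (A : Set ℂ) (hA : A = {z : ℂ | ∃ i : ℤ, 0 ≤ i ∧ i ≤ (N : ℤ) ∧ z = r + (i : ℂ)})
    (b₁ b₂ b₃ b₄ : ℂ) (h1 : b₁ ≠ 0) (h2 : b₂ ≠ 0) (h3 : b₃ ≠ 0) (h4 : b₄ ≠ 0)
    (m1 : b₁ * b₂ ∈ A) (m2 : b₂ * b₃ ∈ A) (m3 : b₃ * b₄ ∈ A) (m4 : b₄ * b₁ ∈ A)
    (hdist : [b₁ * b₂, b₂ * b₃, b₃ * b₄, b₄ * b₁].Pairwise (· ≠ ·)) :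
    ∃ q : ℚ, r = (q : ℂ) := by
  subst hA
  obtain ⟨i, -, -, ei⟩ := m1
  obtain ⟨j, -, -, ej⟩ := m2
  obtain ⟨k, -, -, ek⟩ := m3
  obtain ⟨l, -, -, el⟩ := m4
  simp only [List.pairwise_cons, List.mem_cons, List.mem_singleton,
    List.not_mem_nil] at hdist
  have hij : (i : ℂ) ≠ (j : ℂ) := by
    intro h
    exact hdist.1 _ (Or.inl rfl) (by rw [ei, ej, h])
  have hil : (i : ℂ) ≠ (l : ℂ) := by
    intro h
    exact hdist.1 _ (Or.inr (Or.inr (Or.inl rfl))) (by rw [ei, el, h])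
  have hij' : i ≠ j := fun h => hij (by exact_mod_cast h)
  have hil' : i ≠ l := fun h => hil (by exact_mod_cast h)
  have hmain : (r + (i : ℂ)) * (r + (k : ℂ)) = (r + (j : ℂ)) * (r + (l : ℂ)) := by
    rw [← ei, ← ej, ← ek, ← el]; ring
  have key : r * ((i : ℂ) + k - j - l) = (j : ℂ) * l - i * k := by
    linear_combination hmain
  by_cases hs : i + k = j + l
  · exfalso
    have hsC : (i : ℂ) + k = (j : ℂ) + l := by exact_mod_cast hs
    have hpC : (i : ℂ) * k = (j : ℂ) * l := by
      have h0 : r * ((i : ℂ) + k - j - l) = 0 := by rw [hsC]; ring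
      linear_combination -(key.symm.trans h0)
    have hpZ : i * k = j * l := by exact_mod_cast hpC
    have hz : (i - j) * (i - l) = 0 := by linear_combination i * hs - hpZ
    rcases mul_eq_zero.mp hz with h | h <;> omega
  · have hd : ((i + k - j - l : ℤ) : ℂ) ≠ 0 := by
      rw [Int.cast_ne_zero]; omega
    refine ⟨((j * l - i * k : ℤ) : ℚ) / ((i + k - j - l : ℤ) : ℚ), ?_⟩
    have : r = ((j * l - i * k : ℤ) : ℂ) / ((i + k - j - l : ℤ) : ℂ) := by
      rw [eq_div_iff hd]; push_cast; linear_combination key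
    rw [this]; push_cast; ring
end

section
/- Let B be a finite set of nonzero complex numbers and A ⊆ B.B a set of nonzero rational numbers such that the bipartite incidence structure pairing representations is realized by a simple bipartite graph G on vertex set B (edges {b,b'} with b*b' ∈ A, one edge per element of A). Then there exists a set B' of rational numbers with |B'| ≤ |B| such that A ⊆ B'.B'. -/
lemma walk_key {V : Type*} (G : SimpleGraph V) (C : G.Coloring (Fin 2)) (val : V → ℂ)
    (hz : ∀ v, val v ≠ 0)
    (he : ∀ u v, G.Adj u v → ∃ q : ℚ, q ≠ 0 ∧ val u * val v = (q : ℂ)) :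
    ∀ {u v : V}, G.Reachable u v → ∃ q : ℚ, q ≠ 0 ∧
      ((C u = C v ∧ val u = (q : ℂ) * val v) ∨ (C u ≠ C v ∧ val u * val v = (q : ℂ))) := by
  have trich : ∀ a b c : Fin 2, a ≠ b → c ≠ b → a = c := by decide
  intro u v h
  obtain ⟨w⟩ := h
  induction w with
  | nil => exact ⟨1, one_ne_zero, Or.inl ⟨rfl, by simp⟩⟩
  | @cons u x v h p ih =>
    obtain ⟨q0, hq0ne, hq0⟩ := he u x h
    have hux : C u ≠ C x := C.valid h
    obtain ⟨q, hqne, hq⟩ := ih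
    have hqC : (q : ℂ) ≠ 0 := by exact_mod_cast hqne
    rcases hq with ⟨hc, hx⟩ | ⟨hc, hx⟩
    · refine ⟨q0 / q, div_ne_zero hq0ne hqne, Or.inr ⟨by rw [hc] at hux; exact hux, ?_⟩⟩
      rw [hx] at hq0
      push_cast
      field_simp
      linear_combination hq0
    · refine ⟨q0 / q, div_ne_zero hq0ne hqne, Or.inl ⟨trich _ _ _ hux hc.symm, ?_⟩⟩
      push_cast
      field_simp
      linear_combination val v * hq0 - val u * hx

theorem stmt_9 (B : Finset ℂ) (hB : (0 : ℂ) ∉ B) (A : Set ℂ)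
    (hA : ∀ a ∈ A, a ≠ 0 ∧ ∃ q : ℚ, a = (q : ℂ))
    (G : SimpleGraph {x // x ∈ B}) (hbip : G.Colorable 2)
    (hedge : ∀ u v, G.Adj u v → (u : ℂ) * (v : ℂ) ∈ A)
    (hcover : ∀ a ∈ A, ∃ u v, G.Adj u v ∧ (u : ℂ) * (v : ℂ) = a) :
    ∃ B' : Finset ℚ, B'.card ≤ B.card ∧
      ∀ a ∈ A, ∃ b ∈ B', ∃ b' ∈ B', a = ((b * b' : ℚ) : ℂ) := by
  classical
  obtain ⟨C⟩ := hbip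
  have hz : ∀ v : {x // x ∈ B}, (v : ℂ) ≠ 0 := by
    rintro ⟨v, hv⟩ rfl; exact hB hv
  have he : ∀ u v : {x // x ∈ B}, G.Adj u v → ∃ q : ℚ, q ≠ 0 ∧ (u : ℂ) * (v : ℂ) = (q : ℂ) := by
    intro u v h
    obtain ⟨hne, q, hq⟩ := hA _ (hedge u v h)
    exact ⟨q, by rintro rfl; simp [hq] at hne, hq⟩
  set rep : {x // x ∈ B} → {x // x ∈ B} := fun b => (G.connectedComponentMk b).out with hrepdef
  have hreach : ∀ b, G.Reachable b (rep b) := by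
    intro b
    exact SimpleGraph.ConnectedComponent.exact ((G.connectedComponentMk b).out_eq).symm
  have spec : ∀ b, ∃ q : ℚ, q ≠ 0 ∧
      ((C b = C (rep b) ∧ (b : ℂ) = (q : ℂ) * (rep b : ℂ)) ∨
       (C b ≠ C (rep b) ∧ (b : ℂ) * (rep b : ℂ) = (q : ℂ))) :=
    fun b => walk_key G C (fun x => (x : ℂ)) hz he (hreach b)
  set f : {x // x ∈ B} → ℚ := fun b => (spec b).choose with hfdef
  refine ⟨B.attach.image f, le_trans (Finset.card_image_le) (by simp), ?_⟩
  intro a ha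
  obtain ⟨u, v, huv, hprod⟩ := hcover a ha
  have hrr : rep u = rep v := by
    simp only [hrepdef]
    rw [SimpleGraph.ConnectedComponent.sound huv.reachable]
  have hCuv : C u ≠ C v := C.valid huv
  have trich : ∀ a b c : Fin 2, a ≠ b → c ≠ b → a = c := by decide
  obtain ⟨hqune, hu⟩ := (spec u).choose_spec
  obtain ⟨hqvne, hv⟩ := (spec v).choose_spec
  refine ⟨f u, Finset.mem_image_of_mem f (Finset.mem_attach _ _),
          f v, Finset.mem_image_of_mem f (Finset.mem_attach _ _), ?_⟩
  set q1 := (spec u).choose with hq1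
  set q2 := (spec v).choose with hq2
  have hf1 : f u = q1 := rfl
  have hf2 : f v = q2 := rfl
  rw [hf1, hf2]
  rw [hrr] at hu
  rcases hu with ⟨hcu, hu⟩ | ⟨hcu, hu⟩
  · rcases hv with ⟨hcv, _⟩ | ⟨_, hv⟩
    · exact absurd (hcu.trans hcv.symm) hCuv
    · push_cast
      rw [← hprod]
      linear_combination ((q1:ℂ)) * hv + (v:ℂ) * hu
  · rcases hv with ⟨_, hv⟩ | ⟨hcv, _⟩
    · push_cast
      rw [← hprod]
      linear_combination ((q2:ℂ)) * hu + (u:ℂ) * hv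
    · exact absurd (trich _ _ _ hcu hcv) hCuv
end

section
/- Any simple graph on n vertices with more than n^{3/2} edges contains a cycle of length 4. -/
open Finset

theorem stmt_10 (n : ℕ) (G : SimpleGraph (Fin n)) [DecidableRel G.Adj]
    (h : (n : ℝ) ^ (3 / 2 : ℝ) < G.edgeFinset.card) :
    ∃ v₁ v₂ v₃ v₄ : Fin n,
      v₁ ≠ v₂ ∧ v₁ ≠ v₃ ∧ v₁ ≠ v₄ ∧ v₂ ≠ v₃ ∧ v₂ ≠ v₄ ∧ v₃ ≠ v₄ ∧
      G.Adj v₁ v₂ ∧ G.Adj v₂ v₃ ∧ G.Adj v₃ v₄ ∧ G.Adj v₄ v₁ := by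
  by_contra hc
  set m := G.edgeFinset.card with hm
  -- m ^ 2 > n ^ 3
  have hm3 : n ^ 3 < m ^ 2 := by
    have h0 : (0:ℝ) ≤ (n:ℝ) := Nat.cast_nonneg n
    have hnn : (0:ℝ) ≤ (n:ℝ) ^ (3/2 : ℝ) := Real.rpow_nonneg h0 _
    have hsq : ((n:ℝ) ^ (3/2 : ℝ)) ^ 2 = (n:ℝ) ^ 3 := by
      rw [← Real.rpow_natCast ((n:ℝ) ^ (3/2:ℝ)) 2, ← Real.rpow_mul h0, ← Real.rpow_natCast (n:ℝ) 3]
      norm_num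
    have : ((n:ℝ)) ^ 3 < (m:ℝ) ^ 2 := by
      rw [← hsq]
      exact pow_lt_pow_left₀ h hnn two_ne_zero
    exact_mod_cast this
  -- every pair of distinct vertices has at most one common neighbor
  have key : ∀ p ∈ (univ : Finset (Fin n)).powersetCard 2,
      (univ.filter (fun v => p ⊆ G.neighborFinset v)).card ≤ 1 := by
    intro p hp
    rw [mem_powersetCard] at hp
    obtain ⟨a, b, hab, rfl⟩ := Finset.card_eq_two.mp hp.2
    apply Finset.card_le_one.mpr
    intro v hv w hw
    by_contra hvw
    simp only [mem_filter, Finset.insert_subset_iff, Finset.singleton_subset_iff,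
      SimpleGraph.mem_neighborFinset] at hv hw
    exact hc ⟨v, a, w, b, (G.ne_of_adj hv.2.1), hvw, (G.ne_of_adj hv.2.2),
      fun e => G.ne_of_adj hw.2.1 e.symm, hab, G.ne_of_adj hw.2.2,
      hv.2.1, (hw.2.1).symm, hw.2.2, (hv.2.2).symm⟩
  -- double counting: number of cherries ≤ number of pairs
  have count : ∑ v : Fin n, (G.degree v).choose 2 ≤ n.choose 2 := by
    have step1 : ∀ v : Fin n, (G.degree v).choose 2 =
        ∑ p ∈ (univ : Finset (Fin n)).powersetCard 2,
          (if p ⊆ G.neighborFinset v then 1 else 0) := by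
      intro v
      rw [← Finset.card_filter]
      have hfe : ((univ : Finset (Fin n)).powersetCard 2).filter
          (fun p => p ⊆ G.neighborFinset v) = (G.neighborFinset v).powersetCard 2 := by
        ext p
        simp [mem_powersetCard, and_comm]
      rw [hfe]
      rw [Finset.card_powersetCard]
      rfl
    calc ∑ v : Fin n, (G.degree v).choose 2
        = ∑ v : Fin n, ∑ p ∈ (univ : Finset (Fin n)).powersetCard 2,
            (if p ⊆ G.neighborFinset v then 1 else 0) := by
          exact Finset.sum_congr rfl fun v _ => step1 v
      _ = ∑ p ∈ (univ : Finset (Fin n)).powersetCard 2, ∑ v : Fin n,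
            (if p ⊆ G.neighborFinset v then 1 else 0) := Finset.sum_comm
      _ ≤ ∑ _p ∈ (univ : Finset (Fin n)).powersetCard 2, 1 := by
          refine Finset.sum_le_sum fun p hp => ?_
          rw [← Finset.card_filter]
          simpa using key p hp
      _ = n.choose 2 := by
          simp [Finset.card_powersetCard]
  -- arithmetic
  have hchoose : ∀ d : ℕ, 2 * d.choose 2 = d * (d - 1) := by
    intro d
    cases d with
    | zero => simp
    | succ k =>
      rw [Nat.choose_two_right]
      simp only [Nat.add_sub_cancel]
      rw [Nat.mul_div_cancel' ]
      rcases Nat.even_mul_succ_self k with ⟨c, hcc⟩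
      exact ⟨c, by rw [mul_comm] at hcc; omega⟩
  have hsum_deg : ∑ v : Fin n, G.degree v = 2 * m := G.sum_degrees_eq_twice_card_edges
  have hdsq : ∀ d : ℕ, d ^ 2 = d * (d - 1) + d := by
    intro d
    cases d with
    | zero => simp
    | succ k => simp only [Nat.add_sub_cancel]; ring
  have hS2 : ∑ v : Fin n, (G.degree v) ^ 2 ≤ n * (n - 1) + 2 * m := by
    calc ∑ v : Fin n, (G.degree v) ^ 2
        = ∑ v : Fin n, ((G.degree v) * (G.degree v - 1) + G.degree v) := by
          exact Finset.sum_congr rfl fun v _ => hdsq _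
      _ = (∑ v : Fin n, 2 * (G.degree v).choose 2) + ∑ v : Fin n, G.degree v := by
          rw [← Finset.sum_add_distrib]
          exact Finset.sum_congr rfl fun v _ => by rw [hchoose]
      _ = 2 * (∑ v : Fin n, (G.degree v).choose 2) + 2 * m := by
          rw [← Finset.mul_sum, hsum_deg]
      _ ≤ 2 * n.choose 2 + 2 * m := by
          have := Nat.mul_le_mul_left 2 count
          omega
      _ = n * (n - 1) + 2 * m := by rw [hchoose n]
  have cauchy : (2 * m) ^ 2 ≤ n * ∑ v : Fin n, (G.degree v) ^ 2 := by
    have := sq_sum_le_card_mul_sum_sq (s := (univ : Finset (Fin n))) (f := fun v => G.degree v)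
    simpa [hsum_deg] using this
  have h2m : 2 * m ≤ n * n := by
    have : ∀ v : Fin n, G.degree v ≤ n := fun v => by
      simpa using Finset.card_le_card (Finset.subset_univ (G.neighborFinset v))
    calc 2 * m = ∑ v : Fin n, G.degree v := hsum_deg.symm
      _ ≤ ∑ _v : Fin n, n := Finset.sum_le_sum fun v _ => this v
      _ = n * n := by simp [mul_comm]
  have final : (2 * m) ^ 2 ≤ n * (n * (n - 1) + 2 * m) :=
    le_trans cauchy (Nat.mul_le_mul_left n hS2)
  have hnn1 : n * (n * (n - 1) + 2 * m) ≤ n ^ 3 + n ^ 3 := by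
    have h1 : n * (n - 1) ≤ n * n := Nat.mul_le_mul_left n (Nat.sub_le n 1)
    calc n * (n * (n - 1) + 2 * m) ≤ n * (n * n + n * n) := by
          exact Nat.mul_le_mul_left n (Nat.add_le_add h1 h2m)
      _ = n ^ 3 + n ^ 3 := by ring
  have : 4 * m ^ 2 ≤ n ^ 3 + n ^ 3 := by
    calc 4 * m ^ 2 = (2 * m) ^ 2 := by ring
      _ ≤ _ := le_trans final hnn1
  omega
end

section
/- Let B be a finite set of nonzero real numbers and suppose B.B contains an arithmetic progression A of length N. Then the set |B| = {|b| : b ∈ B} of absolute values satisfies that |B|.|B| contains an arithmetic progression of length at least N/2 (namely the positive or negative terms of A, whichever are more numerous, up to sign). -/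
open scoped Pointwise

theorem stmt_16 (B : Finset ℝ) (hB : (0 : ℝ) ∉ B) (r d : ℝ) (hd : d ≠ 0) (N : ℕ)
    (hA : ∀ i < N, r + d * (i : ℝ) ∈ B * B) :
    ∃ r' d' : ℝ, d' ≠ 0 ∧ ∃ M : ℕ, N ≤ 2 * M ∧
      ∀ i < M, r' + d' * (i : ℝ) ∈ (B.image (fun x => |x|)) * (B.image (fun x => |x|)) := by
  have habs : ∀ x : ℝ, x ∈ B * B →
      |x| ∈ (B.image (fun x => |x|)) * (B.image (fun x => |x|)) := by
    intro x hx
    obtain ⟨b, hb, c, hc, rfl⟩ := Finset.mem_mul.mp hx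
    rw [abs_mul]
    exact Finset.mul_mem_mul (Finset.mem_image_of_mem _ hb) (Finset.mem_image_of_mem _ hc)
  rcases Nat.eq_zero_or_pos N with h0 | hN
  · exact ⟨0, 1, one_ne_zero, 0, by omega, by omega⟩
  set m := N / 2 with hm
  have hmN : m < N := Nat.div_lt_self hN (by norm_num)
  have hfm : r + d * (m : ℝ) ≠ 0 := by
    intro h
    obtain ⟨b, hb, c, hc, hbc⟩ := Finset.mem_mul.mp (hA m hmN)
    have hb0 : b ≠ 0 := fun e => hB (e ▸ hb)
    have hc0 : c ≠ 0 := fun e => hB (e ▸ hc)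
    exact mul_ne_zero hb0 hc0 (by linarith)
  rcases lt_or_gt_of_ne hd with hdneg | hdpos
  · rcases lt_or_gt_of_ne hfm with hv | hv
    · -- d < 0, v < 0 : take indices m, m+1, ..., N-1
      refine ⟨-(r + d * m), -d, neg_ne_zero.mpr hd, N - m, by omega, ?_⟩
      intro i hi
      have hiN : m + i < N := by omega
      have hnn : (0:ℝ) ≤ (i:ℝ) := Nat.cast_nonneg i
      have hneg : r + d * ((m + i : ℕ) : ℝ) < 0 := by push_cast; nlinarith
      have := habs _ (hA (m + i) hiN)
      rw [abs_of_neg hneg] at this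
      have heq : -(r + d * (m:ℝ)) + -d * (i:ℝ) = -(r + d * ((m + i : ℕ):ℝ)) := by
        push_cast; ring
      rw [heq]; exact this
    · -- d < 0, v > 0 : take indices m, m-1, ..., 0
      refine ⟨r + d * m, -d, neg_ne_zero.mpr hd, m + 1, by omega, ?_⟩
      intro i hi
      have him : i ≤ m := by omega
      have hnn : (0:ℝ) ≤ (i:ℝ) := Nat.cast_nonneg i
      have hpos : 0 < r + d * ((m - i : ℕ) : ℝ) := by
        rw [Nat.cast_sub him]; nlinarith
      have := habs _ (hA (m - i) (by omega))
      rw [abs_of_pos hpos] at this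
      have heq : r + d * (m:ℝ) + -d * (i:ℝ) = r + d * ((m - i : ℕ):ℝ) := by
        rw [Nat.cast_sub him]; ring
      rw [heq]; exact this
  · rcases lt_or_gt_of_ne hfm with hv | hv
    · -- d > 0, v < 0 : take indices m, m-1, ..., 0
      refine ⟨-(r + d * m), d, hd, m + 1, by omega, ?_⟩
      intro i hi
      have him : i ≤ m := by omega
      have hnn : (0:ℝ) ≤ (i:ℝ) := Nat.cast_nonneg i
      have hneg : r + d * ((m - i : ℕ) : ℝ) < 0 := by
        rw [Nat.cast_sub him]; nlinarith
      have := habs _ (hA (m - i) (by omega))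
      rw [abs_of_neg hneg] at this
      have heq : -(r + d * (m:ℝ)) + d * (i:ℝ) = -(r + d * ((m - i : ℕ):ℝ)) := by
        rw [Nat.cast_sub him]; ring
      rw [heq]; exact this
    · -- d > 0, v > 0 : take indices m, ..., N-1
      refine ⟨r + d * m, d, hd, N - m, by omega, ?_⟩
      intro i hi
      have hiN : m + i < N := by omega
      have hnn : (0:ℝ) ≤ (i:ℝ) := Nat.cast_nonneg i
      have hpos : 0 < r + d * ((m + i : ℕ) : ℝ) := by push_cast; nlinarith
      have := habs _ (hA (m + i) hiN)
      rw [abs_of_pos hpos] at this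
      have heq : r + d * (m:ℝ) + d * (i:ℝ) = r + d * ((m + i : ℕ):ℝ) := by
        push_cast; ring
      rw [heq]; exact this
end
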